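/- For all powers of two m and n with m ≥ 16, n ≥ 4, and m ≤ 4n, the derived (commutator) subgroup of G(m,n) equals the subgroup generated by a^4, and this subgroup is cyclic of order m/4. -/

import Mathlib

/-- The relators of the presentation `⟨a, b | a^m, b^n, [b,a] = a^4⟩`, where `a` is
`FreeGroup.of true`, `b` is `FreeGroup.of false`, and `[b,a] = b⁻¹a⁻¹ba`. -/
def GRels (m n : ℕ) : Set (FreeGroup Bool) :=
  { FreeGroup.of true ^ m,
    FreeGroup.of false ^ n,
    (FreeGroup.of false)⁻¹ * (FreeGroup.of true)⁻¹ * FreeGroup.of false *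
      FreeGroup.of true * (FreeGroup.of true ^ 4)⁻¹ }

/-- The group `G(m, n) = ⟨a, b | a^m, b^n, [b,a] = a^4⟩`. -/
abbrev Gmn (m n : ℕ) : Type := PresentedGroup (GRels m n)

/-- The image of the generator `a` in `G(m, n)`. -/
def gen_a (m n : ℕ) : Gmn m n := PresentedGroup.of true

/-- The image of the generator `b` in `G(m, n)`. -/
def gen_b (m n : ℕ) : Gmn m n := PresentedGroup.of false


private lemma three_pow_aux : ∀ k : ℕ, 1 ≤ k → (2:ℤ)^(k+2) ∣ 3^(2^k) - 1 := by
  intro k hk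
  induction k with
  | zero => omega
  | succ k ih =>
    rcases Nat.eq_or_lt_of_le hk with h | h
    · norm_num [← h]
    · have hk1 : 1 ≤ k := by omega
      have h2 : (3:ℤ)^(2^(k+1)) - 1 = (3^(2^k) - 1) * (3^(2^k) + 1) := by
        rw [pow_succ, pow_mul]; ring
      have h3 : (2:ℤ) ∣ 3^(2^k) + 1 := by
        have hodd : Odd ((3:ℤ)^(2^k)) := Odd.pow ⟨1, by norm_num⟩
        obtain ⟨c, hc⟩ := hodd
        exact ⟨c+1, by omega⟩
      rw [h2, pow_succ]
      exact mul_dvd_mul (ih hk1) h3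

section
variable {m n : ℕ}

lemma rel_holds (r : FreeGroup Bool) (hr : r ∈ GRels m n) :
    PresentedGroup.mk (GRels m n) r = 1 :=
  (QuotientGroup.eq_one_iff _).mpr (Subgroup.subset_normalClosure hr)

lemma rel1 : gen_a m n ^ m = 1 := by
  have := rel_holds (m := m) (n := n) (FreeGroup.of true ^ m) (by left; rfl)
  rwa [map_pow] at this

lemma rel2 : gen_b m n ^ n = 1 := by
  have := rel_holds (m := m) (n := n) (FreeGroup.of false ^ n) (by right; left; rfl)
  rwa [map_pow] at this

lemma rel3 : (gen_b m n)⁻¹ * (gen_a m n)⁻¹ * gen_b m n * gen_a m n = gen_a m n ^ 4 := by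
  have := rel_holds _ (show _ ∈ GRels m n by right; right; rfl)
  simp only [map_mul, map_inv, map_pow] at this
  have h := mul_eq_one_iff_eq_inv.mp this
  rwa [inv_inv] at h

end

section
variable {m n : ℕ}

local notation "a" => gen_a m n
local notation "b" => gen_b m n

lemma conj_a_pow (k : ℤ) : (b)⁻¹ * (a) ^ k * (b) = (a) ^ (-3 * k) := by
  have key : ∀ x : Gmn m n, (b)⁻¹ * x * (b) = (MulAut.conj ((b):Gmn m n)⁻¹) x := by
    intro x; simp [MulAut.conj_apply, mul_assoc]
  have h1 : (b)⁻¹ * (a)⁻¹ * (b) = (a) ^ (3:ℕ) := by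
    have h := rel3 (m := m) (n := n)
    have h' : (b)⁻¹ * (a)⁻¹ * (b) * (a) * (a)⁻¹ = (a) ^ 4 * (a)⁻¹ := by rw [h]
    simpa [pow_succ, mul_assoc] using h'
  have h2 : (b)⁻¹ * (a) * (b) = (a) ^ (-3 : ℤ) := by
    have h'' := congrArg (fun z => z⁻¹) h1
    simp only [mul_inv_rev, inv_inv] at h''
    rw [← mul_assoc] at h''
    rw [h'']
    group
  rw [key, map_zpow, ← key, h2, ← zpow_mul]

lemma a_zpow_eq (p q : ℤ) (h : (m:ℤ) ∣ p - q) : (a) ^ p = (a) ^ q := by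
  obtain ⟨c, hc⟩ := h
  have : p = q + (m:ℤ) * c := by omega
  rw [this, zpow_add, zpow_mul, zpow_natCast, rel1, one_zpow, mul_one]

end

section
variable {m n : ℕ}
local notation "a" => gen_a m n
local notation "b" => gen_b m n
local notation "HH" => Subgroup.closure {gen_a m n ^ 4}

lemma mem_H_iff {x : Gmn m n} : x ∈ (HH) ↔ ∃ k : ℤ, (a) ^ (4*k) = x := by
  rw [Subgroup.mem_closure_singleton]
  constructor
  · rintro ⟨k, hk⟩
    exact ⟨k, by rw [← hk, ← zpow_natCast (a) 4, ← zpow_mul]; norm_num⟩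
  · rintro ⟨k, hk⟩
    exact ⟨k, by rw [← hk, ← zpow_natCast (a) 4, ← zpow_mul]; norm_num⟩

lemma H_normal (hcop : Nat.Coprime 3 m) : (HH : Subgroup (Gmn m n)).Normal := by
  obtain ⟨u, v, huv⟩ := (Nat.isCoprime_iff_coprime.mpr hcop : IsCoprime (3:ℤ) (m:ℤ))
  set t : ℤ := -u with ht
  have hdvd : (m:ℤ) ∣ 3 * t + 1 := ⟨v, by push_cast at huv ⊢; linarith⟩
  rw [← Subgroup.normalizer_eq_top_iff, eq_top_iff,
    ← PresentedGroup.closure_range_of (GRels m n), Subgroup.closure_le]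
  rintro x ⟨s, rfl⟩
  cases s
  · -- of false = b
    show (b) ∈ Subgroup.normalizer ((HH : Subgroup (Gmn m n)) : Set (Gmn m n))
    rw [Subgroup.mem_normalizer_iff]
    intro h
    constructor
    · intro hmem
      obtain ⟨k, rfl⟩ := mem_H_iff.mp hmem
      have key : (b)⁻¹ * (a)^(4*(k*t)) * (b) = (a)^(4*k) := by
        rw [conj_a_pow]
        apply a_zpow_eq
        have : -3 * (4 * (k * t)) - 4 * k = -4*k*(3*t+1) := by ring
        rw [this]
        exact Dvd.dvd.mul_left hdvd _
      have : (b) * (a)^(4*k) * (b)⁻¹ = (a)^(4*(k*t)) := by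
        rw [← key]; group
      rw [this]
      exact mem_H_iff.mpr ⟨k*t, rfl⟩
    · intro hmem
      obtain ⟨k, hk⟩ := mem_H_iff.mp hmem
      have : h = (b)⁻¹ * (a)^(4*k) * (b) := by rw [hk]; group
      rw [this, conj_a_pow]
      exact mem_H_iff.mpr ⟨-3*k, by ring_nf⟩
  · -- of true = a
    show (a) ∈ Subgroup.normalizer ((HH : Subgroup (Gmn m n)) : Set (Gmn m n))
    rw [Subgroup.mem_normalizer_iff]
    intro h
    have hconj : ∀ k : ℤ, (a) * (a)^(4*k) * (a)⁻¹ = (a)^(4*k) := by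
      intro k; group
    constructor
    · intro hmem
      obtain ⟨k, rfl⟩ := mem_H_iff.mp hmem
      rw [hconj]
      exact mem_H_iff.mpr ⟨k, rfl⟩
    · intro hmem
      obtain ⟨k, hk⟩ := mem_H_iff.mp hmem
      have : h = (a)⁻¹ * (a)^(4*k) * (a) := by rw [hk]; group
      rw [this]
      refine mem_H_iff.mpr ⟨k, ?_⟩
      group

end

open scoped commutatorElement

section
variable {m n : ℕ}
local notation "a" => gen_a m n
local notation "b" => gen_b m n
local notation "HH" => Subgroup.closure {gen_a m n ^ 4}

lemma range_of_eq :
    Set.range (PresentedGroup.of : Bool → Gmn m n) = {gen_a m n, gen_b m n} := by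
  ext x
  simp only [Set.mem_range, Set.mem_insert_iff, Set.mem_singleton_iff]
  constructor
  · rintro ⟨(_|_), rfl⟩
    · right; rfl
    · left; rfl
  · rintro (rfl | rfl)
    exacts [⟨true, rfl⟩, ⟨false, rfl⟩]

lemma gen_top : Subgroup.closure ({gen_a m n, gen_b m n} : Set (Gmn m n)) = ⊤ := by
  rw [← range_of_eq]; exact PresentedGroup.closure_range_of _

lemma H_le_commutator : (HH) ≤ commutator (Gmn m n) := by
  rw [Subgroup.closure_le]
  intro x hx
  rw [Set.mem_singleton_iff] at hx
  subst hx
  have h4 : (a)^4 = ⁅(b)⁻¹, (a)⁻¹⁆ := by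
    rw [commutatorElement_def, inv_inv, inv_inv]
    exact rel3.symm
  rw [h4, commutator_def]
  exact Subgroup.commutator_mem_commutator (Subgroup.mem_top _) (Subgroup.mem_top _)

lemma commutator_le_H (hcop : Nat.Coprime 3 m) :
    commutator (Gmn m n) ≤ (HH) := by
  haveI hN : (HH : Subgroup (Gmn m n)).Normal := H_normal hcop
  set q := QuotientGroup.mk' (HH) with hqdef
  have hq1 : q ((a)^4) = 1 :=
    (QuotientGroup.eq_one_iff _).mpr (Subgroup.mem_closure_singleton_self _)
  have hab : Commute (q (a)) (q (b)) := by
    have h1 : (q (b))⁻¹ * (q (a))⁻¹ * q (b) * q (a) = 1 := by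
      rw [← map_inv, ← map_inv, ← map_mul, ← map_mul, ← map_mul, rel3]
      exact hq1
    have h2 : ⁅(q (b))⁻¹, (q (a))⁻¹⁆ = 1 := by
      rw [commutatorElement_def, inv_inv, inv_inv]
      exact h1
    have h3 : Commute (q (b)) (q (a)) := by
      simpa using (commutatorElement_eq_one_iff_commute.mp h2).inv_inv
    exact h3.symm
  have hgen : Subgroup.closure ({q (a), q (b)} : Set _) = ⊤ := by
    have h1 : Subgroup.map q ⊤ = ⊤ :=
      Subgroup.map_top_of_surjective q (QuotientGroup.mk'_surjective _)
    rw [← gen_top, MonoidHom.map_closure, Set.image_pair] at h1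
    exact h1
  have pass1 : ∀ x, x ∈ Subgroup.centralizer ({q (a), q (b)} : Set _) := by
    intro x
    have hsub : ({q (a), q (b)} : Set _) ⊆ Subgroup.centralizer ({q (a), q (b)} : Set _) := by
      rintro s (rfl | rfl) <;> simp only [SetLike.mem_coe, Subgroup.mem_centralizer_iff] <;>
        rintro g (rfl | rfl) <;> first | rfl | exact hab.eq | exact hab.eq.symm
    exact (Subgroup.closure_le _).mpr hsub (hgen ▸ Subgroup.mem_top x)
  have hcommAll : ∀ x y : Gmn m n ⧸ (HH), Commute x y := by
    intro x y
    have hsub2 : ({q (a), q (b)} : Set _) ⊆ Subgroup.centralizer {x} := by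
      intro s hs
      simp only [SetLike.mem_coe, Subgroup.mem_centralizer_iff]
      intro g hg
      rw [Set.mem_singleton_iff] at hg
      subst hg
      exact (Subgroup.mem_centralizer_iff.mp (pass1 g) s hs).symm
    have := (Subgroup.closure_le _).mpr hsub2 (hgen ▸ Subgroup.mem_top y)
    exact Subgroup.mem_centralizer_iff.mp this x rfl
  rw [commutator_def, Subgroup.commutator_le]
  intro g1 _ g2 _
  have : q ⁅g1, g2⁆ = 1 := by
    rw [map_commutatorElement]
    exact commutatorElement_eq_one_iff_commute.mpr (hcommAll _ _)
  exact (QuotientGroup.eq_one_iff _).mp this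

end

section
variable {m : ℕ}

lemma addRight_pow (k : ℕ) : (Equiv.addRight (1 : ZMod m))^k = Equiv.addRight (k : ZMod m) := by
  induction k with
  | zero => ext x; simp
  | succ k ih => rw [pow_succ, ih]; ext x; push_cast; simp; ring

lemma mulLeft_pow (w : (ZMod m)ˣ) (k : ℕ) : (Units.mulLeft w)^k = Units.mulLeft (w^k) := by
  induction k with
  | zero => ext x; simp
  | succ k ih => rw [pow_succ, ih]; ext x; simp [pow_succ]; ring

lemma mulLeft_inv (w : (ZMod m)ˣ) : (Units.mulLeft w)⁻¹ = Units.mulLeft w⁻¹ := by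
  rw [Equiv.Perm.inv_def, Units.mulLeft_symm]

lemma addRight_inv : (Equiv.addRight (1 : ZMod m))⁻¹ = Equiv.addRight (-1 : ZMod m) := by
  rw [Equiv.Perm.inv_def]; ext x; simp

end

section
variable {m n : ℕ}

lemma order_a (hcop : Nat.Coprime 3 m) (hne : Even n)
    (hdvd : (m:ℤ) ∣ 3^n - 1) : orderOf (gen_a m n) = m := by
  have hu3 : ((ZMod.unitOfCoprime 3 hcop : (ZMod m)ˣ) : ZMod m) = 3 := by
    rw [ZMod.coe_unitOfCoprime]; norm_num
  let v : (ZMod m)ˣ := -(ZMod.unitOfCoprime 3 hcop)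
  have hvval : (v : ZMod m) = -3 := by
    rw [Units.val_neg, hu3]
  let A : Equiv.Perm (ZMod m) := Equiv.addRight (1 : ZMod m)
  let B : Equiv.Perm (ZMod m) := Units.mulLeft v⁻¹
  have hcond : ∀ r ∈ GRels m n, FreeGroup.lift (fun x => cond x A B) r = 1 := by
    intro r hr
    rcases hr with rfl | rfl | rfl
    · rw [map_pow, FreeGroup.lift_apply_of]
      show A ^ m = 1
      rw [show A = Equiv.addRight (1 : ZMod m) from rfl, addRight_pow, ZMod.natCast_self]
      ext x; simp
    · rw [map_pow, FreeGroup.lift_apply_of]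
      show B ^ n = 1
      have hu3n : (ZMod.unitOfCoprime 3 hcop : (ZMod m)ˣ) ^ n = 1 := by
        have h1 : (((3:ℤ)^n - 1 : ℤ) : ZMod m) = 0 := by
          rw [ZMod.intCast_zmod_eq_zero_iff_dvd]
          exact hdvd
        push_cast at h1
        ext
        push_cast
        rw [hu3]
        linear_combination h1
      have hvn : v⁻¹ ^ n = 1 := by
        rw [inv_pow, show v = -(ZMod.unitOfCoprime 3 hcop) from rfl, hne.neg_pow, hu3n, inv_one]
      rw [show B = Units.mulLeft v⁻¹ from rfl, mulLeft_pow, hvn]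
      ext x; simp
    · simp only [map_mul, map_inv, map_pow, FreeGroup.lift_apply_of]
      show B⁻¹ * A⁻¹ * B * A * (A^4)⁻¹ = 1
      rw [mul_inv_eq_one]
      rw [show B = Units.mulLeft v⁻¹ from rfl, show A = Equiv.addRight (1 : ZMod m) from rfl,
        mulLeft_inv, addRight_inv, addRight_pow, inv_inv]
      ext x
      simp only [Equiv.Perm.mul_apply, Units.mulLeft_apply, Equiv.coe_addRight]
      have hstep : (↑v : ZMod m) * (↑v⁻¹ * (x + 1) + -1) = (x + 1) - ↑v := by
        rw [mul_add, ← mul_assoc, Units.mul_inv, one_mul]; ring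
      rw [hstep, hvval]
      push_cast
      ring
  let f : Gmn m n →* Equiv.Perm (ZMod m) := PresentedGroup.toGroup hcond
  have hfa : f (gen_a m n) = A := PresentedGroup.toGroup.of hcond
  have h1 : orderOf (gen_a m n) ∣ m := orderOf_dvd_of_pow_eq_one rel1
  have h2 : m ∣ orderOf (gen_a m n) := by
    have hA1 : A ^ orderOf (gen_a m n) = 1 := by
      rw [← hfa, ← map_pow, pow_orderOf_eq_one, map_one]
    rw [show A = Equiv.addRight (1 : ZMod m) from rfl, addRight_pow] at hA1
    have h0 : ((orderOf (gen_a m n) : ZMod m)) = 0 := by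
      have := congrArg (fun e : Equiv.Perm (ZMod m) => e 0) hA1
      simpa using this
    exact (ZMod.natCast_eq_zero_iff _ _).mp h0
  exact Nat.dvd_antisymm h1 h2

end

/-- The derived subgroup of `G(m, n)` is the subgroup generated by `a^4`, which is
cyclic of order `m / 4`. -/
theorem Gmn_commutator (m n : ℕ) (hm : ∃ i, m = 2 ^ i) (hn : ∃ j, n = 2 ^ j)
    (hm16 : 16 ≤ m) (hn4 : 4 ≤ n) (hmn : m ≤ 4 * n) :
    commutator (Gmn m n) = Subgroup.closure {gen_a m n ^ 4} ∧
    IsCyclic (Subgroup.closure {gen_a m n ^ 4} : Subgroup (Gmn m n)) ∧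
    Nat.card (Subgroup.closure {gen_a m n ^ 4} : Subgroup (Gmn m n)) = m / 4 := by
  obtain ⟨i, rfl⟩ := hm
  obtain ⟨j, rfl⟩ := hn
  have hi : 4 ≤ i := by
    have h0 : (2:ℕ)^4 ≤ 2^i := le_trans (by norm_num) hm16
    exact (Nat.pow_le_pow_iff_right (a := 2) (by norm_num)).mp h0
  have hj : 2 ≤ j := by
    have h0 : (2:ℕ)^2 ≤ 2^j := le_trans (by norm_num) hn4
    exact (Nat.pow_le_pow_iff_right (a := 2) (by norm_num)).mp h0
  have hij : i ≤ j + 2 := by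
    have h1 : 2^i ≤ 2^(j+2) := by
      calc 2^i ≤ 4 * 2^j := hmn
        _ = 2^(j+2) := by ring
    exact (Nat.pow_le_pow_iff_right (a := 2) (by norm_num)).mp h1
  have hcop : Nat.Coprime 3 (2^i) := Nat.Coprime.pow_right _ (by norm_num)
  have hne : Even (2^j) := (Nat.even_pow).mpr ⟨even_two, by omega⟩
  have hdvd : ((2^i : ℕ) : ℤ) ∣ 3^(2^j) - 1 := by
    have h1 := three_pow_aux j (by omega)
    have h2 : ((2:ℤ))^i ∣ (2:ℤ)^(j+2) := pow_dvd_pow 2 hij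
    push_cast
    exact h2.trans h1
  have horda := order_a (m := 2^i) (n := 2^j) hcop hne hdvd
  have h4dvd : (4:ℕ) ∣ 2^i := by
    have : (2:ℕ)^2 ∣ 2^i := pow_dvd_pow 2 (by omega)
    simpa using this
  refine ⟨le_antisymm (commutator_le_H hcop) H_le_commutator, ?_, ?_⟩
  · constructor
    refine ⟨⟨gen_a (2^i) (2^j) ^ 4, Subgroup.mem_closure_singleton_self _⟩, ?_⟩
    rintro ⟨x, hx⟩
    obtain ⟨k, hk⟩ := Subgroup.mem_closure_singleton.mp hx
    exact ⟨k, Subtype.ext (by simpa using hk)⟩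
  · rw [← Subgroup.zpowers_eq_closure, Nat.card_zpowers,
      orderOf_pow' _ (by norm_num : (4:ℕ) ≠ 0), horda, Nat.gcd_eq_right h4dvd]
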